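/- Let f : ℝ^d → ℝ be L-smooth, let h : ℝ^d → ℝ be ρ-weakly convex with ρ ≥ 0, set φ = f + h, and let α > 0 satisfy 16αL ≤ 1 and 48αρ ≤ 1. Let n ≥ 1, let x_i, ν_i ∈ ℝ^d for i = 1,…,n, let u_i = prox_h^{α^{-1}}(x_i − α ν_i) and G_i = (1/α)(x_i − u_i), and set x̄ = (1/n)Σ_i x_i, ν̄ = (1/n)Σ_i ν_i, ū = (1/n)Σ_i u_i. Then φ(ū) − φ(x̄) ≤ (9/(16αn)) Σ_{i=1}^n ‖x̄ − x_i‖² + (α/(2n)) Σ_{i=1}^n ‖ν̄ − ν_i‖² + 8α ‖∇f(x̄) − ν̄‖² − (3α/(8n)) Σ_{i=1}^n ‖G_i‖². -/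

import Mathlib

open Finset

noncomputable section

open RealInnerProductSpace

section Helpers

variable {E : Type*} [NormedAddCommGroup E] [InnerProductSpace ℝ E]

theorem young8' (p q : E) : ⟪p, q⟫ ≤ 8 * ‖p‖ ^ 2 + ‖q‖ ^ 2 / 32 := by
  have h0 : (0:ℝ) ≤ ‖(4:ℝ) • p - (4:ℝ)⁻¹ • q‖ ^ 2 := by positivity
  rw [norm_sub_sq_real, real_inner_smul_left, real_inner_smul_right,
    norm_smul, norm_smul, Real.norm_eq_abs, Real.norm_eq_abs] at h0
  have h4 : |(4:ℝ)| = 4 := by norm_num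
  have h4i : |(4:ℝ)⁻¹| = 4⁻¹ := by norm_num
  rw [h4, h4i] at h0
  nlinarith

theorem sq_norm_add_le' (p q : E) : ‖p + q‖ ^ 2 ≤ 2 * ‖p‖ ^ 2 + 2 * ‖q‖ ^ 2 := by
  nlinarith [norm_add_le p q, sq_nonneg (‖p‖ - ‖q‖), norm_nonneg p, norm_nonneg q,
    norm_nonneg (p + q)]

theorem norm_combo_sq' (t : ℝ) (z u w : E) :
    ‖(t • z + (1 - t) • u) - w‖ ^ 2 =
      t * ‖z - w‖ ^ 2 + (1 - t) * ‖u - w‖ ^ 2 - t * (1 - t) * ‖z - u‖ ^ 2 := by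
  have he : (t • z + (1 - t) • u) - w = t • (z - w) + (1 - t) • (u - w) := by
    rw [smul_sub, smul_sub]; module
  have hz : z - u = (z - w) - (u - w) := by abel
  rw [he, hz]
  simp only [← real_inner_self_eq_norm_sq, inner_add_left, inner_add_right,
    inner_sub_left, inner_sub_right, real_inner_smul_left, real_inner_smul_right]
  rw [real_inner_comm z w, real_inner_comm u w, real_inner_comm z u]
  ring

theorem quad_growth' {c b : ℝ} (hc : 0 ≤ c)
    (h : ∀ t : ℝ, 0 < t → t < 1 → (1 - t) * c ≤ b) : c ≤ b := by
  by_contra hcb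
  push_neg at hcb
  have hb : 0 ≤ b := by
    have := h (1/2) (by norm_num) (by norm_num)
    nlinarith
  have hc0 : 0 < c := lt_of_le_of_lt hb hcb
  have ht0 : 0 < (c - b) / (2 * c) := div_pos (by linarith) (by linarith)
  have ht1 : (c - b) / (2 * c) < 1 := (div_lt_one (by linarith)).2 (by linarith)
  have ht := h _ ht0 ht1
  have hfe : (c - b) / (2 * c) * c = (c - b) / 2 := by field_simp
  nlinarith

theorem strong_prox' (h : E → ℝ) (ρ α : ℝ) (hα : 0 < α) (hαρ : α * ρ ≤ 1)
    (hwc : ConvexOn ℝ Set.univ (fun z => h z + (ρ / 2) * ‖z‖ ^ 2))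
    (y uu : E)
    (hu : ∀ z, h uu + (1 / (2 * α)) * ‖uu - y‖ ^ 2 ≤ h z + (1 / (2 * α)) * ‖z - y‖ ^ 2)
    (z : E) :
    h uu + (1 / (2 * α)) * ‖uu - y‖ ^ 2 + ((1/α - ρ)/2) * ‖z - uu‖ ^ 2 ≤
      h z + (1 / (2 * α)) * ‖z - y‖ ^ 2 := by
  set μ := 1/α - ρ with hμ
  have hμ0 : 0 ≤ μ := by
    rw [hμ, div_sub' hα.ne']
    apply div_nonneg _ hα.le
    nlinarith
  have key : ∀ t : ℝ, 0 < t → t < 1 →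
      (1 - t) * ((μ/2) * ‖z - uu‖ ^ 2) ≤
        (h z + (1 / (2 * α)) * ‖z - y‖ ^ 2) - (h uu + (1 / (2 * α)) * ‖uu - y‖ ^ 2) := by
    intro t ht0 ht1
    set m := t • z + (1 - t) • uu with hm
    have hconv := hwc.2 (Set.mem_univ z) (Set.mem_univ uu) (le_of_lt ht0)
      (by linarith : (0:ℝ) ≤ 1 - t) (by ring : t + (1 - t) = 1)
    simp only [smul_eq_mul] at hconv
    rw [← hm] at hconv
    have hcm1 := norm_combo_sq' t z uu y
    have hcm2 := norm_combo_sq' t z uu (0 : E)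
    simp only [sub_zero] at hcm2
    rw [← hm] at hcm1 hcm2
    have hmin := hu m
    have hexp : (1 / (2 * α)) * ‖m - y‖ ^ 2 =
        t * ((1 / (2 * α)) * ‖z - y‖ ^ 2) + (1 - t) * ((1 / (2 * α)) * ‖uu - y‖ ^ 2)
          - (1 / (2 * α)) * (t * (1 - t) * ‖z - uu‖ ^ 2) := by
      rw [hcm1]; ring
    have hquad : (ρ/2) * ‖m‖ ^ 2 =
        t * ((ρ/2) * ‖z‖ ^ 2) + (1 - t) * ((ρ/2) * ‖uu‖ ^ 2)
          - (ρ/2) * (t * (1 - t) * ‖z - uu‖ ^ 2) := by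
      rw [hcm2]; ring
    have hc2 : (1 / (2 * α)) * (t * (1 - t) * ‖z - uu‖ ^ 2)
        - (ρ/2) * (t * (1 - t) * ‖z - uu‖ ^ 2)
        = (μ/2) * (t * (1 - t) * ‖z - uu‖ ^ 2) := by rw [hμ]; ring
    have final : t * ((μ/2) * ((1 - t) * ‖z - uu‖ ^ 2)) ≤
        t * ((h z + (1 / (2 * α)) * ‖z - y‖ ^ 2)
          - (h uu + (1 / (2 * α)) * ‖uu - y‖ ^ 2)) := by
      have hr : (μ/2) * (t * (1 - t) * ‖z - uu‖ ^ 2)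
          = t * ((μ/2) * ((1 - t) * ‖z - uu‖ ^ 2)) := by ring
      rw [hr] at hc2
      linarith
    have := (mul_le_mul_iff_right₀ ht0).1 final
    linarith
  have := quad_growth' (by positivity) key
  linarith

theorem per_i' (α ρ : ℝ) (hα : 0 < α) (hρ : 0 ≤ ρ) (a v V G : E) :
    (1/(2*α)) * (‖a + α • v‖ ^ 2 - ‖α • v - α • G‖ ^ 2) - ((1/α - ρ)/2) * ‖a + α • G‖ ^ 2
    ≤ (1/(2*α) + ρ) * ‖a‖ ^ 2 + (α/2) * ‖V - v‖ ^ 2 + (ρ * α^2 - α/2) * ‖G‖ ^ 2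
      + α * ⟪V, G⟫ + ⟪V, a⟫ := by
  set w := a + α • G with hw
  have e1 : ‖a + α • v‖ ^ 2 = ‖a‖ ^ 2 + 2*α*⟪a, v⟫ + α^2*‖v‖ ^ 2 := by
    rw [← real_inner_self_eq_norm_sq]
    simp only [inner_add_left, inner_add_right, real_inner_smul_left, real_inner_smul_right]
    rw [real_inner_comm a v]
    simp only [real_inner_self_eq_norm_sq]; ring
  have e2 : ‖α • v - α • G‖ ^ 2 = α^2*‖v‖ ^ 2 - 2*α^2*⟪v, G⟫ + α^2*‖G‖ ^ 2 := by
    rw [← real_inner_self_eq_norm_sq]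
    simp only [inner_sub_left, inner_sub_right, real_inner_smul_left, real_inner_smul_right]
    rw [real_inner_comm v G]
    simp only [real_inner_self_eq_norm_sq]; ring
  have split : ⟪a, v⟫ + α * ⟪v, G⟫ = ⟪v - V, w⟫ + ⟪V, a⟫ + α * ⟪V, G⟫ := by
    rw [hw]
    simp only [inner_sub_left, inner_add_right, real_inner_smul_right]
    rw [real_inner_comm a v]
    ring
  have y1 : 2*α*⟪v - V, w⟫ ≤ α^2*‖v - V‖ ^ 2 + ‖w‖ ^ 2 := by
    have h0 : (0:ℝ) ≤ ‖α • (v - V) - w‖ ^ 2 := by positivity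
    rw [norm_sub_sq_real, real_inner_smul_left, norm_smul, Real.norm_eq_abs,
      abs_of_pos hα] at h0
    nlinarith
  have y2 : ‖w‖ ^ 2 ≤ 2*‖a‖ ^ 2 + 2*α^2*‖G‖ ^ 2 := by
    have := sq_norm_add_le' a (α • G)
    rw [norm_smul, Real.norm_eq_abs, abs_of_pos hα] at this
    rw [hw]; nlinarith
  have hVv : ‖V - v‖ = ‖v - V‖ := norm_sub_rev V v
  have expand : (1/(2*α)) * (‖a + α • v‖ ^ 2 - ‖α • v - α • G‖ ^ 2)
      = (1/(2*α))*‖a‖ ^ 2 + ⟪a, v⟫ + α*⟪v, G⟫ - (α/2)*‖G‖ ^ 2 := by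
    rw [e1, e2]; field_simp; ring
  have key : ⟪v - V, w⟫ - ((1/α - ρ)/2) * ‖w‖ ^ 2
      ≤ (α/2)*‖v - V‖ ^ 2 + ρ*‖a‖ ^ 2 + ρ*α^2*‖G‖ ^ 2 := by
    have hy1' : ⟪v - V, w⟫ ≤ (α/2)*‖v - V‖ ^ 2 + (1/(2*α))*‖w‖ ^ 2 := by
      have h2α : 0 < 2*α := by linarith
      rw [← sub_nonneg]
      have hre : (α/2)*‖v - V‖ ^ 2 + (1/(2*α))*‖w‖ ^ 2 - ⟪v - V, w⟫
          = (α^2*‖v - V‖ ^ 2 + ‖w‖ ^ 2 - 2*α*⟪v - V, w⟫) / (2*α) := by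
        field_simp
      rw [hre]
      apply div_nonneg _ h2α.le
      linarith
    have hco : (1/(2*α)) - ((1/α - ρ)/2) = ρ/2 := by field_simp; ring
    have hws : ((1/(2*α)) - ((1/α - ρ)/2)) * ‖w‖ ^ 2 = (ρ/2) * ‖w‖ ^ 2 := by rw [hco]
    nlinarith [norm_nonneg w, sq_nonneg (‖w‖)]
  rw [expand, hVv]
  linarith [key, split]

variable [CompleteSpace E]

theorem descent_lemma' (f : E → ℝ) (hdiff : Differentiable ℝ f) (L : ℝ) (hL : 0 ≤ L)
    (hs : ∀ x y, ‖gradient f x - gradient f y‖ ≤ L * ‖x - y‖) (a b : E) :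
    f b ≤ f a + ⟪gradient f a, b - a⟫ + (3 * L / 4) * ‖b - a‖ ^ 2 := by
  have hgrad : ∀ x v, fderiv ℝ f x v = ⟪gradient f x, v⟫ := by
    intro x v; rw [gradient]; simp [InnerProductSpace.toDual_apply_apply]
  have hfd : ∀ x y, ‖fderiv ℝ f x - fderiv ℝ f y‖ ≤ L * ‖x - y‖ := by
    intro x y
    calc ‖fderiv ℝ f x - fderiv ℝ f y‖ = ‖gradient f x - gradient f y‖ := by
          rw [gradient, gradient, ← LinearIsometryEquiv.map_sub,
            LinearIsometryEquiv.norm_map]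
      _ ≤ L * ‖x - y‖ := hs x y
  set m := a + (2:ℝ)⁻¹ • (b - a) with hm
  have hma : m - a = (2:ℝ)⁻¹ • (b - a) := by rw [hm]; abel
  have hbm : b - m = (2:ℝ)⁻¹ • (b - a) := by
    have h1 : b - m = ((1:ℝ) - 2⁻¹) • (b - a) := by
      rw [hm, sub_smul, one_smul]; abel
    rw [h1]; norm_num
  have hnma : ‖m - a‖ = ‖b - a‖ / 2 := by
    rw [hma, norm_smul]; simp [Real.norm_eq_abs]; ring
  have hnbm : ‖b - m‖ = ‖b - a‖ / 2 := by
    rw [hbm, norm_smul]; simp [Real.norm_eq_abs]; ring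
  have seg_bound : ∀ (p q : E), ∀ z ∈ segment ℝ p q, ‖z - p‖ ≤ ‖q - p‖ := by
    rintro p q z ⟨s, t, hs0, ht0, hst, rfl⟩
    have he : s • p + t • q - p = t • (q - p) := by
      have hs1 : s = 1 - t := by linarith
      rw [hs1]; module
    rw [he, norm_smul, Real.norm_eq_abs, abs_of_nonneg ht0]
    nlinarith [norm_nonneg (q - p)]
  have mvt : ∀ p q : E, ‖f q - f p - fderiv ℝ f p (q - p)‖ ≤ (L * ‖q - p‖) * ‖q - p‖ := by
    intro p q
    refine (convex_segment p q).norm_image_sub_le_of_norm_fderiv_le'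
      (fun z _ => hdiff z) (fun z hz => ?_) (left_mem_segment ℝ p q)
      (right_mem_segment ℝ p q)
    calc ‖fderiv ℝ f z - fderiv ℝ f p‖ ≤ L * ‖z - p‖ := hfd z p
      _ ≤ L * ‖q - p‖ := by
          have := seg_bound p q z hz
          nlinarith
  have h1 := mvt a m
  have h2 := mvt m b
  have h3 : ‖(fderiv ℝ f m - fderiv ℝ f a) (b - m)‖ ≤ (L * ‖m - a‖) * ‖b - m‖ := by
    calc ‖(fderiv ℝ f m - fderiv ℝ f a) (b - m)‖
        ≤ ‖fderiv ℝ f m - fderiv ℝ f a‖ * ‖b - m‖ :=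
          ContinuousLinearMap.le_opNorm _ _
      _ ≤ (L * ‖m - a‖) * ‖b - m‖ := by
          have := hfd m a
          nlinarith [norm_nonneg (b - m)]
  have e3 : (fderiv ℝ f m - fderiv ℝ f a) (b - m) =
      fderiv ℝ f m (b - m) - fderiv ℝ f a (b - m) := by simp
  have lin : fderiv ℝ f a (b - a) = fderiv ℝ f a (m - a) + fderiv ℝ f a (b - m) := by
    rw [← ContinuousLinearMap.map_add]; congr 1; abel
  have habs1 := abs_le.1 (h1.trans_eq' (Real.norm_eq_abs _).symm) |>.2
  have habs2 := abs_le.1 (h2.trans_eq' (Real.norm_eq_abs _).symm) |>.2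
  have habs3 := abs_le.1 (h3.trans_eq' (Real.norm_eq_abs _).symm) |>.2
  rw [e3] at habs3
  rw [← hgrad a (b - a)]
  have key : f b - f a - fderiv ℝ f a (b - a) ≤ 3 * L / 4 * ‖b - a‖ ^ 2 := by
    have expand : f b - f a - fderiv ℝ f a (b - a) =
        (f b - f m - fderiv ℝ f m (b - m)) + (f m - f a - fderiv ℝ f a (m - a)) +
        (fderiv ℝ f m (b - m) - fderiv ℝ f a (b - m)) := by rw [lin]; ring
    rw [expand]
    have hsum : L * ‖m - a‖ * ‖m - a‖ + L * ‖b - m‖ * ‖b - m‖ + L * ‖m - a‖ * ‖b - m‖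
        = 3 * L / 4 * ‖b - a‖ ^ 2 := by rw [hnma, hnbm]; ring
    linarith
  linarith

end Helpers

/-- Average of a stacked vector. -/
def avg {d n : ℕ} (x : Fin n → EuclideanSpace ℝ (Fin d)) : EuclideanSpace ℝ (Fin d) :=
  (n : ℝ)⁻¹ • ∑ i, x i

set_option maxHeartbeats 1000000 in
/-- One-step descent of the composite objective along the
averaged proximal update. -/
theorem composite_descent_avg {d n : ℕ} (hn : 1 ≤ n) (L ρ α : ℝ) (hρ : 0 ≤ ρ)
    (f : EuclideanSpace ℝ (Fin d) → ℝ) (hdiff : Differentiable ℝ f)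
    (hsmooth : ∀ x y, ‖gradient f x - gradient f y‖ ≤ L * ‖x - y‖)
    (h : EuclideanSpace ℝ (Fin d) → ℝ)
    (hwc : ConvexOn ℝ Set.univ (fun z => h z + (ρ / 2) * ‖z‖ ^ 2))
    (hα : 0 < α) (hαL : 16 * α * L ≤ 1) (hαρ : 48 * α * ρ ≤ 1)
    (x ν u : Fin n → EuclideanSpace ℝ (Fin d))
    (hu : ∀ i, ∀ z, h (u i) + (1 / (2 * α)) * ‖u i - (x i - α • ν i)‖ ^ 2 ≤
      h z + (1 / (2 * α)) * ‖z - (x i - α • ν i)‖ ^ 2) :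
    (f (avg u) + h (avg u)) - (f (avg x) + h (avg x)) ≤
      (9 / (16 * α * n)) * ∑ i, ‖avg x - x i‖ ^ 2 +
      (α / (2 * n)) * ∑ i, ‖avg ν - ν i‖ ^ 2 +
      8 * α * ‖gradient f (avg x) - avg ν‖ ^ 2 -
      (3 * α / (8 * n)) * ∑ i, ‖α⁻¹ • (x i - u i)‖ ^ 2 := by
  have hn0 : (0:ℝ) < (n:ℝ) := by exact_mod_cast Nat.lt_of_lt_of_le Nat.zero_lt_one hn
  have hαρ1 : α * ρ ≤ 1 := by nlinarith [mul_nonneg hα.le hρ]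
  set X := avg x with hXdef
  set V := avg ν with hVdef
  set U := avg u with hUdef
  set g := gradient f X with hgdef
  set G : Fin n → EuclideanSpace ℝ (Fin d) := fun i => α⁻¹ • (x i - u i) with hGdef
  set Gb := avg G with hGbdef
  -- basic identities
  have hxu : ∀ i, x i - u i = α • G i := by
    intro i; rw [hGdef]; simp only
    rw [smul_inv_smul₀ hα.ne']
  have hsv : ∀ v : Fin n → EuclideanSpace ℝ (Fin d), (n:ℝ) • avg v = ∑ i, v i := by
    intro v; rw [avg, smul_smul, mul_inv_cancel₀ hn0.ne', one_smul]
  have hUX : X - U = α • Gb := by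
    have e1 : X - U = (n:ℝ)⁻¹ • (∑ i, (x i - u i)) := by
      rw [hXdef, hUdef, avg, avg, ← smul_sub, Finset.sum_sub_distrib]
    have e2 : ∑ i, (x i - u i) = ∑ i, α • G i := Finset.sum_congr rfl (fun i _ => hxu i)
    rw [e1, e2, ← Finset.smul_sum, smul_comm]
    rfl
  -- variance identity
  have var : ∀ v : Fin n → EuclideanSpace ℝ (Fin d),
      (n:ℝ)*‖avg v‖^2 + ∑ i, ‖v i - avg v‖^2 = ∑ i, ‖v i‖^2 := by
    intro v
    have hin : ∑ i, ⟪v i, avg v⟫ = (n:ℝ)*‖avg v‖^2 := by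
      rw [← sum_inner, ← hsv v, real_inner_smul_left, real_inner_self_eq_norm_sq]
    have hsplit : ∑ i, ‖v i - avg v‖^2
        = ∑ i, ‖v i‖^2 - 2*(∑ i, ⟪v i, avg v⟫) + (n:ℝ)*‖avg v‖^2 := by
      have hper : ∀ i ∈ Finset.univ, ‖v i - avg v‖^2
          = ‖v i‖^2 - 2*⟪v i, avg v⟫ + ‖avg v‖^2 := fun i _ => norm_sub_sq_real _ _
      rw [Finset.sum_congr rfl hper, Finset.sum_add_distrib, Finset.sum_sub_distrib,
        Finset.mul_sum, Finset.sum_const, Finset.card_univ, Fintype.card_fin,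
        nsmul_eq_mul]
    rw [hsplit, hin]; ring
  -- sums
  set S1 := ∑ i, ‖X - x i‖^2 with hS1def
  set S2 := ∑ i, ‖V - ν i‖^2 with hS2def
  set S3 := ∑ i, ‖G i‖^2 with hS3def
  have hS1nn : 0 ≤ S1 := Finset.sum_nonneg (fun i _ => by positivity)
  have hS3nn : 0 ≤ S3 := Finset.sum_nonneg (fun i _ => by positivity)
  -- L' and descent
  set L' := max L 0 with hL'def
  have hL'0 : 0 ≤ L' := le_max_right L 0
  have hL'α : 16 * α * L' ≤ 1 := by
    rcases le_total L 0 with hc | hc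
    · rw [hL'def, max_eq_right hc]; nlinarith
    · rwa [hL'def, max_eq_left hc]
  have hsmooth' : ∀ a b, ‖gradient f a - gradient f b‖ ≤ L' * ‖a - b‖ := by
    intro a b
    exact le_trans (hsmooth a b)
      (mul_le_mul_of_nonneg_right (le_max_left L 0) (norm_nonneg _))
  have hUXneg : U - X = -(α • Gb) := by rw [← hUX]; abel
  have hnUX : ‖U - X‖^2 = α^2 * ‖Gb‖^2 := by
    rw [hUXneg, norm_neg, norm_smul, Real.norm_eq_abs, abs_of_pos hα, mul_pow]
  have h1 : f U - f X ≤ -(α*⟪g,Gb⟫) + (3*α/64)*‖Gb‖^2 := by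
    have hd := descent_lemma' f hdiff L' hL'0 hsmooth' X U
    have hip : ⟪g, U - X⟫ = -(α*⟪g,Gb⟫) := by
      rw [hUXneg, inner_neg_right, real_inner_smul_right]
    have hcoef : (3*L'/4) * ‖U - X‖^2 ≤ (3*α/64)*‖Gb‖^2 := by
      rw [hnUX]
      have he : (3*L'/4) * (α^2*‖Gb‖^2) = (3*α/64) * ((16*α*L') * ‖Gb‖^2) := by ring
      rw [he]
      have hb1 : (16*α*L') * ‖Gb‖^2 ≤ 1 * ‖Gb‖^2 :=
        mul_le_mul_of_nonneg_right hL'α (by positivity)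
      have hb2 := mul_le_mul_of_nonneg_left hb1 (by positivity : (0:ℝ) ≤ 3*α/64)
      linarith
    rw [hip] at hd
    linarith
  -- Jensen for h
  have hweights : ∑ _i : Fin n, (n:ℝ)⁻¹ = 1 := by
    rw [Finset.sum_const, Finset.card_univ, Fintype.card_fin, nsmul_eq_mul,
      mul_inv_cancel₀ hn0.ne']
  have hUsum : U = ∑ i, (n:ℝ)⁻¹ • u i := by
    rw [hUdef, avg, Finset.smul_sum]
  have jensen : h (∑ i, (n:ℝ)⁻¹ • u i) + (ρ / 2) * ‖∑ i, (n:ℝ)⁻¹ • u i‖^2 ≤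
      ∑ i, (n:ℝ)⁻¹ * (h (u i) + (ρ / 2) * ‖u i‖^2) :=
    hwc.map_sum_le (fun i _ => by positivity) hweights (fun i _ => Set.mem_univ _)
  have h2 : (n:ℝ) * h U ≤ (∑ i, h (u i)) + (ρ/2) * (∑ i, ‖u i - U‖^2) := by
    rw [← hUsum] at jensen
    rw [← Finset.mul_sum] at jensen
    have hmul : (n:ℝ) * (h U + (ρ/2) * ‖U‖^2) ≤ ∑ i, (h (u i) + (ρ/2) * ‖u i‖^2) := by
      have hj := mul_le_mul_of_nonneg_left jensen hn0.le
      calc (n:ℝ) * (h U + (ρ/2) * ‖U‖^2)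
          ≤ (n:ℝ) * ((n:ℝ)⁻¹ * (∑ i, (h (u i) + (ρ/2) * ‖u i‖^2))) := hj
        _ = ∑ i, (h (u i) + (ρ/2) * ‖u i‖^2) := by
            rw [← mul_assoc, mul_inv_cancel₀ hn0.ne', one_mul]
    have hsum2 : ∑ i, (h (u i) + (ρ/2) * ‖u i‖^2)
        = (∑ i, h (u i)) + (ρ/2) * (∑ i, ‖u i‖^2) := by
      rw [Finset.sum_add_distrib, Finset.mul_sum]
    have hvar := var u
    rw [← hUdef] at hvar
    have hvar2 : (ρ/2)*((n:ℝ)*‖U‖^2) + (ρ/2)*(∑ i, ‖u i - U‖^2)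
        = (ρ/2)*(∑ i, ‖u i‖^2) := by linear_combination (ρ/2) * hvar
    linarith [hmul, hsum2, hvar2]
  -- bound Σ‖u i - U‖²
  have h3 : (∑ i, ‖u i - U‖^2) ≤ 2*S1 + 2*α^2*S3 := by
    have hper : ∀ i ∈ Finset.univ, ‖u i - U‖^2 ≤ 2*‖X - x i‖^2 + 2*α^2*‖G i - Gb‖^2 := by
      intro i _
      have e1 : u i = x i - α • G i := by
        have hx1 := hxu i
        have : x i - (x i - u i) = x i - α • G i := by rw [hx1]
        simpa using this
      have e2 : U = X - α • Gb := by rw [← hUX]; abel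
      have hid : u i - U = -((X - x i) + α • (G i - Gb)) := by
        rw [e1, e2, smul_sub]; abel
      rw [hid, norm_neg]
      have hb := sq_norm_add_le' (X - x i) (α • (G i - Gb))
      rw [norm_smul, Real.norm_eq_abs, abs_of_pos hα] at hb
      nlinarith [hb]
    have hle := Finset.sum_le_sum hper
    have hsplit : ∑ i, (2*‖X - x i‖^2 + 2*α^2*‖G i - Gb‖^2)
        = 2*S1 + 2*α^2*(∑ i, ‖G i - Gb‖^2) := by
      rw [Finset.sum_add_distrib, hS1def, ← Finset.mul_sum, ← Finset.mul_sum]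
    have hvarG := var G
    rw [← hGbdef] at hvarG
    have hGv : (∑ i, ‖G i - Gb‖^2) ≤ S3 := by
      have hnn : (0:ℝ) ≤ (n:ℝ)*‖Gb‖^2 := by positivity
      linarith
    have := mul_le_mul_of_nonneg_left hGv (by positivity : (0:ℝ) ≤ 2*α^2)
    linarith
  -- per-i h bound
  have h4 : ∀ i, h (u i) ≤ h X + (1/(2*α)+ρ)*‖X - x i‖^2 + (α/2)*‖V - ν i‖^2
      + (ρ*α^2 - α/2)*‖G i‖^2 + α*⟪V, G i⟫ + ⟪V, X - x i⟫ := by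
    intro i
    have hsp := strong_prox' h ρ α hα hαρ1 hwc (x i - α • ν i) (u i) (hu i) X
    have id1 : X - (x i - α • ν i) = (X - x i) + α • ν i := by abel
    have id2 : u i - (x i - α • ν i) = α • ν i - α • G i := by
      have h' : u i - (x i - α • ν i) = α • ν i - (x i - u i) := by abel
      rw [h', hxu i]
    have id3 : X - u i = (X - x i) + α • G i := by
      have h' : X - u i = (X - x i) + (x i - u i) := by abel
      rw [h', hxu i]
    rw [id1, id2, id3] at hsp
    have hpi := per_i' α ρ hα hρ (X - x i) (ν i) V (G i)
    linarith
  have hzero : ∑ i, ⟪V, X - x i⟫ = 0 := by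
    rw [← inner_sum]
    have hz : ∑ i, (X - x i) = 0 := by
      rw [Finset.sum_sub_distrib, Finset.sum_const, Finset.card_univ, Fintype.card_fin]
      rw [← Nat.cast_smul_eq_nsmul ℝ n X, hsv x, sub_self]
    rw [hz, inner_zero_right]
  have hGsum : ∑ i, ⟪V, G i⟫ = (n:ℝ) * ⟪V, Gb⟫ := by
    rw [← inner_sum, ← hsv G, real_inner_smul_right]
  have h4s : ∑ i, h (u i) ≤ (n:ℝ)*h X + (1/(2*α)+ρ)*S1 + (α/2)*S2
      + (ρ*α^2 - α/2)*S3 + α*((n:ℝ)*⟪V, Gb⟫) := by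
    have hle := Finset.sum_le_sum (fun i (_ : i ∈ Finset.univ) => h4 i)
    have hsplit : ∑ i, (h X + (1/(2*α)+ρ)*‖X - x i‖^2 + (α/2)*‖V - ν i‖^2
        + (ρ*α^2 - α/2)*‖G i‖^2 + α*⟪V, G i⟫ + ⟪V, X - x i⟫)
        = (n:ℝ)*h X + (1/(2*α)+ρ)*S1 + (α/2)*S2 + (ρ*α^2 - α/2)*S3
          + α*(∑ i, ⟪V, G i⟫) + ∑ i, ⟪V, X - x i⟫ := by
      rw [Finset.sum_add_distrib, Finset.sum_add_distrib, Finset.sum_add_distrib,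
        Finset.sum_add_distrib, Finset.sum_add_distrib, Finset.sum_const,
        Finset.card_univ, Fintype.card_fin, nsmul_eq_mul,
        ← Finset.mul_sum, ← Finset.mul_sum, ← Finset.mul_sum, ← Finset.mul_sum]
    rw [hsplit, hzero, hGsum] at hle
    linarith
  -- global Young
  have h5 : ⟪V, Gb⟫ - ⟪g, Gb⟫ ≤ 8*‖g - V‖^2 + ‖Gb‖^2/32 := by
    have hy := young8' (V - g) Gb
    rw [inner_sub_left] at hy
    rw [norm_sub_rev V g] at hy
    linarith
  have h6 : (n:ℝ)*‖Gb‖^2 ≤ S3 := by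
    have hvarG := var G
    rw [← hGbdef] at hvarG
    have : 0 ≤ ∑ i, ‖G i - Gb‖^2 := Finset.sum_nonneg (fun i _ => by positivity)
    linarith
  -- coefficient bounds
  have c1 : (1/(2*α) + 2*ρ) ≤ 9/(16*α) := by
    rw [← sub_nonneg]
    have he : 9/(16*α) - (1/(2*α) + 2*ρ) = (1 - 32*α*ρ)/(16*α) := by
      field_simp; ring
    rw [he]
    apply div_nonneg (by linarith) (by linarith)
  have c3 : (2*ρ*α^2 - α/2 + 5*α/64) ≤ -(3*α/8) := by
    have hr : α*ρ ≤ 1/48 := by linarith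
    have := mul_le_mul_of_nonneg_left hr (by positivity : (0:ℝ) ≤ 2*α)
    nlinarith
  -- final arithmetic
  have main : (n:ℝ)*((f U + h U) - (f X + h X)) ≤
      (9/(16*α))*S1 + (α/2)*S2 + 8*(n:ℝ)*α*‖g - V‖^2 - (3*α/8)*S3 := by
    have m1 := mul_le_mul_of_nonneg_left h1 hn0.le
    have m5 := mul_le_mul_of_nonneg_left h5 (by positivity : (0:ℝ) ≤ (n:ℝ)*α)
    have m6 := mul_le_mul_of_nonneg_left h6 (by positivity : (0:ℝ) ≤ 5*α/64)
    have mc1 := mul_le_mul_of_nonneg_right c1 hS1nn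
    have mc3 := mul_le_mul_of_nonneg_right c3 hS3nn
    have m3 := mul_le_mul_of_nonneg_left h3 (by positivity : (0:ℝ) ≤ ρ/2)
    linarith [m1, h2, h4s, m5, m6, mc1, mc3, m3]
  have hrhs : (n:ℝ) * ((9 / (16 * α * (n:ℝ))) * S1 + (α / (2 * (n:ℝ))) * S2
      + 8 * α * ‖g - V‖^2 - (3 * α / (8 * (n:ℝ))) * S3)
      = (9/(16*α))*S1 + (α/2)*S2 + 8*(n:ℝ)*α*‖g - V‖^2 - (3*α/8)*S3 := by
    field_simp
  have main' : (n:ℝ) * ((f U + h U) - (f X + h X)) ≤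
      (n:ℝ) * ((9 / (16 * α * (n:ℝ))) * S1 + (α / (2 * (n:ℝ))) * S2
        + 8 * α * ‖g - V‖^2 - (3 * α / (8 * (n:ℝ))) * S3) := by
    rw [hrhs]; exact main
  exact le_of_mul_le_mul_left main' hn0

end
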